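/- If A and B are bounded operators on a complex Hilbert space with AB = λBA, AB ≠ 0, and A is self-adjoint, then λ is real. -/

import Mathlib

variable {H : Type*} [NormedAddCommGroup H] [InnerProductSpace ℂ H] [CompleteSpace H]

theorem stmt6 (A B : H →L[ℂ] H) (lam : ℂ)
    (hA : IsSelfAdjoint A)
    (h : A * B = lam • (B * A)) (hne : A * B ≠ 0) : lam.im = 0 := by
  rcases subsingleton_or_nontrivial H with hH | hH
  · exact absurd (Subsingleton.elim _ _) hne
  have hlam : lam ≠ 0 := by
    rintro rfl
    simp only [zero_smul] at h
    exact hne h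
  have hcl : (star lam : ℂ) ≠ 0 := star_ne_zero.mpr hlam
  set μ : ℂ := lam * (star lam)⁻¹ with hμdef
  have hμ0 : μ ≠ 0 := mul_ne_zero hlam (inv_ne_zero hcl)
  -- adjoint of h
  have hstar : star B * A = star lam • (A * star B) := by
    have := congrArg star h
    simpa [star_mul, star_smul, hA.star_eq] using this
  have h1 : A * star B = (star lam)⁻¹ • (star B * A) := by
    rw [hstar, smul_smul, inv_mul_cancel₀ hcl, one_smul]
  -- the key commutation relation
  have key : A * (B * star B) = μ • ((B * star B) * A) := by
    calc A * (B * star B) = (A * B) * star B := by rw [mul_assoc]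
      _ = lam • (B * (A * star B)) := by rw [h, smul_mul_assoc, mul_assoc]
      _ = lam • (B * ((star lam)⁻¹ • (star B * A))) := by rw [h1]
      _ = μ • ((B * star B) * A) := by
          rw [mul_smul_comm, smul_smul, hμdef, mul_assoc]
  set E : H →L[ℂ] H := A * ((B * star B) * A) with hEdef
  set T : H →L[ℂ] H := ((B * star B) * A) * A with hTdef
  have hET : E = μ • T := by
    rw [hEdef, hTdef, ← mul_assoc, key, smul_mul_assoc]
  have hEeq : E = (A * B) * star (A * B) := by
    rw [star_mul, hA.star_eq, hEdef, mul_assoc, mul_assoc]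
  have hEsa : IsSelfAdjoint E := hEeq ▸ IsSelfAdjoint.mul_star_self (A * B)
  have hEnn : (0 : H →L[ℂ] H) ≤ E := hEeq ▸ mul_star_self_nonneg (A * B)
  have hE0 : E ≠ 0 := by
    intro hE
    apply hne
    have : ‖A * B‖ * ‖A * B‖ = 0 := by
      rw [← CStarRing.norm_self_mul_star, ← hEeq, hE, norm_zero]
    rcases mul_self_eq_zero.mp this with h'
    exact norm_eq_zero.mp h'
  -- every element of the complex spectrum of E is a nonnegative real
  have hreal : ∀ x ∈ spectrum ℂ E, x = (x.re : ℂ) ∧ 0 ≤ x.re := by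
    intro x hx
    have hxre : x = (x.re : ℂ) := SpectrumRestricts.real_iff.mp hEsa.spectrumRestricts x hx
    have : x.re ∈ spectrum ℝ E := by
      rw [← spectrum.algebraMap_mem_iff ℂ]
      simpa [← hxre] using hx
    exact ⟨hxre, spectrum_nonneg_of_nonneg hEnn this⟩
  -- there is a nonzero element in the spectrum of E
  obtain ⟨t, htE, ht0⟩ : ∃ t ∈ spectrum ℂ E, t ≠ 0 := by
    by_contra hcon
    push_neg at hcon
    have hσ : spectrum ℂ E = {0} := by
      apply Set.eq_singleton_iff_nonempty_unique_mem.mpr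
      exact ⟨spectrum.nonempty E, hcon⟩
    have hrad : spectralRadius ℂ E = 0 := by
      rw [spectralRadius, hσ]
      simp
    rw [hEsa.spectralRadius_eq_nnnorm] at hrad
    exact hE0 (by simpa using hrad)
  -- transfer through σ(E) = μ • σ(T) and σ(T)\{0} = σ(E)\{0}
  have hu := spectrum.unit_smul_eq_smul T (Units.mk0 μ hμ0)
  have htT : μ⁻¹ * t ∈ spectrum ℂ T := by
    have hE' : t ∈ spectrum ℂ ((Units.mk0 μ hμ0) • T) := by
      simpa [Units.smul_def, ← hET] using htE
    rw [hu, Set.mem_smul_set_iff_inv_smul_mem] at hE'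
    simpa [Units.smul_def] using hE' 
  have hswap : spectrum ℂ T \ {0} = spectrum ℂ E \ {0} :=
    spectrum.nonzero_mul_comm ((B * star B) * A) A
  have htT0 : μ⁻¹ * t ≠ 0 := mul_ne_zero (inv_ne_zero hμ0) ht0
  have htE2 : μ⁻¹ * t ∈ spectrum ℂ E := by
    have : μ⁻¹ * t ∈ spectrum ℂ T \ {0} := ⟨htT, htT0⟩
    exact (hswap ▸ this).1
  -- now μ = t / (μ⁻¹ t) is a ratio of positive reals
  obtain ⟨htre, htpos⟩ := hreal t htE
  obtain ⟨hsre, hspos⟩ := hreal _ htE2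
  set r : ℝ := t.re
  set s : ℝ := (μ⁻¹ * t).re
  have hr0 : r ≠ 0 := fun hr => ht0 (by rw [htre, hr]; simp)
  have hs0 : s ≠ 0 := fun hs => htT0 (by rw [hsre, hs]; simp)
  have hs0' : (s : ℂ) ≠ 0 := by exact_mod_cast hs0
  have hμval : μ = ((r / s : ℝ) : ℂ) := by
    have h2 : μ * (s : ℂ) = (r : ℂ) := by
      rw [← hsre, ← htre, ← mul_assoc, mul_inv_cancel₀ hμ0, one_mul]
    push_cast
    rw [eq_div_iff hs0']
    exact h2
  -- conclude lam.im = 0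
  have hlameq : lam = ((r / s : ℝ) : ℂ) * star lam := by
    rw [← hμval, hμdef, mul_assoc, inv_mul_cancel₀ hcl, mul_one]
  have hc : (0 : ℝ) < r / s := by
    rcases lt_or_eq_of_le htpos with h' | h'
    · rcases lt_or_eq_of_le hspos with h'' | h''
      · positivity
      · exact absurd h''.symm hs0
    · exact absurd h'.symm hr0
  have him : lam.im = (r / s) * (-lam.im) := by
    conv_lhs => rw [hlameq]
    simp [Complex.mul_im]
  nlinarith [him, hc, sq_nonneg lam.im]
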